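/- arXiv:2508.10513 — 2 statements merged into one kernel-verified Lean document; each statement's English description precedes it below -/
import Mathlib

section
/- On SO(3), for ξ ∈ ℝ³ with φ = ‖ξ‖ not a nonzero multiple of 2π, the matrices dexp_ξ = I + (β/2)ξ̃ + ((1−α)/φ²)ξ̃² and D_ξ = I − ½ξ̃ + ((1−γ)/φ²)ξ̃², with α = sinc φ, β = sinc²(φ/2), γ = α/β, are mutually inverse: dexp_ξ · D_ξ = I. -/
open Matrix

/-- The skew-symmetric matrix `ξ̃` associated with `ξ ∈ ℝ³`. -/
def skew (ξ : Fin 3 → ℝ) : Matrix (Fin 3) (Fin 3) ℝ :=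
  !![0, -ξ 2, ξ 1; ξ 2, 0, -ξ 0; -ξ 1, ξ 0, 0]

/-- `sinc x = sin x / x` for `x ≠ 0`, and `sinc 0 = 1`. -/
noncomputable def sinc (x : ℝ) : ℝ := if x = 0 then 1 else Real.sin x / x

lemma expand_aux (S : Matrix (Fin 3) (Fin 3) ℝ) (a b a' b' : ℝ) :
    (1 + a • S + b • S^2) * (1 + a' • S + b' • S^2)
  = 1 + (a + a') • S + (b + b' + a*a') • S^2 + (a*b' + a'*b) • S^3 + (b*b') • S^4 := by
  have h1 : S * S = S^2 := (sq S).symm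
  have h2 : S * S^2 = S^3 := by rw [← pow_succ']
  have h3 : S^2 * S = S^3 := by rw [← pow_succ]
  have h4 : S^2 * S^2 = S^4 := by rw [← pow_add]
  simp only [mul_add, add_mul, one_mul, mul_one, smul_mul_assoc, mul_smul_comm, smul_smul,
    h1, h2, h3, h4]
  module

lemma skew_cube (ξ : Fin 3 → ℝ) :
    (skew ξ)^3 = (-(ξ 0 ^ 2 + ξ 1 ^ 2 + ξ 2 ^ 2)) • skew ξ := by
  ext i j
  fin_cases i <;> fin_cases j <;>
    simp [skew, pow_succ, Matrix.mul_apply, Fin.sum_univ_three] <;> ring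

set_option maxHeartbeats 1000000 in
/-- On `SO(3)`, for `φ = ‖ξ‖` not a nonzero multiple of `2π`, the closed forms
`dexp_ξ = I + (β/2)ξ̃ + ((1−α)/φ²)ξ̃²` and `D_ξ = I − ½ξ̃ + ((1−γ)/φ²)ξ̃²`
(with `α = sinc φ`, `β = sinc²(φ/2)`, `γ = α/β`) are mutually inverse. -/
theorem stmt6 (ξ : Fin 3 → ℝ) (φ α β γ : ℝ)
    (hφ : φ = Real.sqrt (ξ 0 ^ 2 + ξ 1 ^ 2 + ξ 2 ^ 2))
    (hmult : ¬∃ k : ℤ, k ≠ 0 ∧ φ = 2 * Real.pi * k)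
    (hα : α = sinc φ) (hβ : β = sinc (φ / 2) ^ 2) (hγ : γ = α / β)
    (dexpM D : Matrix (Fin 3) (Fin 3) ℝ)
    (hdexp : dexpM = 1 + (β / 2) • skew ξ + ((1 - α) / φ ^ 2) • (skew ξ) ^ 2)
    (hD : D = 1 - (1 / 2 : ℝ) • skew ξ + ((1 - γ) / φ ^ 2) • (skew ξ) ^ 2) :
    dexpM * D = 1 := by
  by_cases h0 : φ = 0
  · -- then ξ = 0 and both matrices are the identity
    have hs : ξ 0 ^ 2 + ξ 1 ^ 2 + ξ 2 ^ 2 = 0 := by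
      have h := hφ
      rw [h0] at h
      have hnn : (0:ℝ) ≤ ξ 0 ^ 2 + ξ 1 ^ 2 + ξ 2 ^ 2 := by positivity
      nlinarith [Real.sq_sqrt hnn]
    have h0' : ξ 0 = 0 ∧ ξ 1 = 0 ∧ ξ 2 = 0 := by
      refine ⟨?_, ?_, ?_⟩ <;> nlinarith [sq_nonneg (ξ 0), sq_nonneg (ξ 1), sq_nonneg (ξ 2)]
    have hS : skew ξ = 0 := by
      unfold skew
      rw [h0'.1, h0'.2.1, h0'.2.2]
      norm_num
      ext i j
      fin_cases i <;> fin_cases j <;> rfl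
    simp [hdexp, hD, hS, zero_pow]
  · -- main case
    set S := skew ξ with hSdef
    have hφpos : 0 < φ := by
      rw [hφ] at h0 ⊢
      exact lt_of_le_of_ne (Real.sqrt_nonneg _) (Ne.symm h0)
    have hφ2 : φ ^ 2 = ξ 0 ^ 2 + ξ 1 ^ 2 + ξ 2 ^ 2 := by
      rw [hφ]; exact Real.sq_sqrt (by positivity)
    have key : S ^ 3 = (-(φ^2)) • S := by rw [hSdef, skew_cube, hφ2]
    have key4 : S ^ 4 = (-(φ^2)) • S ^ 2 := by
      rw [show (4:ℕ) = 1 + 3 from rfl, pow_add, pow_one, key, mul_smul_comm, ← sq]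
    have hsin : Real.sin (φ / 2) ≠ 0 := by
      intro hs
      rcases Real.sin_eq_zero_iff.mp hs with ⟨n, hn⟩
      apply hmult
      refine ⟨n, ?_, by linear_combination -2 * hn⟩
      intro hn0
      rw [hn0] at hn
      simp at hn
      exact h0 (by linarith)
    have hφ2ne : φ / 2 ≠ 0 := by positivity
    have hαv : α = Real.sin φ / φ := by rw [hα, sinc, if_neg h0]
    have hβv : β = (Real.sin (φ/2) / (φ/2)) ^ 2 := by rw [hβ, sinc, if_neg hφ2ne]
    have hβne : β ≠ 0 := by rw [hβv]; positivity
    have hβγ : β * γ = α := by rw [hγ]; field_simp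
    have hsinφ : Real.sin φ = 2 * Real.sin (φ/2) * Real.cos (φ/2) := by
      rw [show φ = 2 * (φ/2) by ring, Real.sin_two_mul]
      ring_nf
    have hid : 1 - α * γ = β * φ ^ 2 / 4 := by
      have hpyth := Real.sin_sq_add_cos_sq (φ/2)
      rw [hγ, hαv, hβv, hsinφ]
      field_simp
      linear_combination (-4) * hpyth
    have hD' : D = 1 + (-(1/2) : ℝ) • S + ((1 - γ) / φ ^ 2) • S ^ 2 := by
      rw [hD, sub_eq_add_neg, ← neg_smul]
    rw [hdexp, hD', expand_aux, key, key4]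
    have e1 : (β / 2 + -(1/2)) - φ^2 * (β/2 * ((1 - γ)/φ^2) + (-(1/2)) * ((1-α)/φ^2)) = 0 := by
      field_simp
      linear_combination hβγ
    have e2 : ((1-α)/φ^2 + (1-γ)/φ^2 + (β/2) * (-(1/2))) - φ^2 * (((1-α)/φ^2) * ((1-γ)/φ^2)) = 0 := by
      field_simp
      linear_combination 4 * hid
    calc 1 + (β / 2 + -(1/2)) • S + ((1-α)/φ^2 + (1-γ)/φ^2 + β/2 * -(1/2)) • S^2
          + (β/2 * ((1-γ)/φ^2) + -(1/2) * ((1-α)/φ^2)) • (-(φ^2)) • S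
          + ((1-α)/φ^2 * ((1-γ)/φ^2)) • (-(φ^2)) • S^2
        = 1 + ((β / 2 + -(1/2)) - φ^2 * (β/2 * ((1 - γ)/φ^2) + (-(1/2)) * ((1-α)/φ^2))) • S
          + (((1-α)/φ^2 + (1-γ)/φ^2 + (β/2) * (-(1/2))) - φ^2 * (((1-α)/φ^2) * ((1-γ)/φ^2))) • S^2 := by
          module
      _ = 1 := by rw [e1, e2]; simp
end

section
/- For R ∈ SO(3) with tr(R) ≠ −1 and R ≠ I, setting φ = arccos((tr R − 1)/2) ∈ (0, π), the matrix X = (φ/(2 sin φ))(R − Rᵀ) is skew-symmetric and satisfies exp(X) = R. -/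
open Matrix

lemma pow_odd_even' {M : Type*} [Ring M] (K : M) (hK : K*K*K = -K) :
    ∀ m : ℕ, K^(2*m+1) = (-1:ℤ)^m • K ∧ K^(2*m+2) = (-1:ℤ)^m • (K*K) := by
  intro m
  induction m with
  | zero => simp [pow_succ]
  | succ n ih =>
    obtain ⟨h1, h2⟩ := ih
    have key : K^(2*(n+1)+1) = (-1:ℤ)^(n+1) • K := by
      have e : 2*(n+1)+1 = (2*n+2)+1 := by ring
      rw [e, pow_succ, h2, smul_mul_assoc, mul_assoc, ← mul_assoc, hK]
      rw [pow_succ]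
      simp [smul_smul, mul_comm]
    refine ⟨key, ?_⟩
    have : 2*(n+1)+2 = (2*(n+1)+1)+1 := by ring
    rw [this, pow_succ, key, smul_mul_assoc]

lemma exp_rodrigues' (K : Matrix (Fin 3) (Fin 3) ℝ) (hK : K*K*K = -K) (φ : ℝ) :
    NormedSpace.exp (φ • K) = 1 + Real.sin φ • K + (1 - Real.cos φ) • (K*K) := by
  letI : SeminormedRing (Matrix (Fin 3) (Fin 3) ℝ) := Matrix.linftyOpSemiNormedRing
  letI : NormedRing (Matrix (Fin 3) (Fin 3) ℝ) := Matrix.linftyOpNormedRing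
  letI : NormedAlgebra ℝ (Matrix (Fin 3) (Fin 3) ℝ) := Matrix.linftyOpNormedAlgebra
  have hexp : NormedSpace.exp (φ • K)
      = ∑' n : ℕ, ((Nat.factorial n : ℝ))⁻¹ • (φ • K)^n := by
    rw [NormedSpace.exp_eq_tsum (𝕂 := ℝ)]
  have hpow := pow_odd_even' K hK
  set f : ℕ → Matrix (Fin 3) (Fin 3) ℝ
    := fun n => ((Nat.factorial n : ℝ))⁻¹ • (φ • K)^n with hf
  set Fs : ℕ → Matrix (Fin 3) (Fin 3) ℝ := fun n =>
    if n % 2 = 0 then ((-1:ℝ)^(n/2) * φ^(n+1) / (Nat.factorial (n+1))) • K else 0 with hFs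
  set Fc : ℕ → Matrix (Fin 3) (Fin 3) ℝ := fun n =>
    if n % 2 = 1 then ((-1:ℝ)^(n/2) * φ^(n+1) / (Nat.factorial (n+1))) • (K*K) else 0 with hFc
  have hsplit : ∀ n, f (n+1) = Fs n + Fc n := by
    intro n
    rcases Nat.even_or_odd n with ⟨m, hm⟩ | ⟨m, hm⟩
    · subst hm
      have h1 := (hpow m).1
      simp only [hf, hFs, hFc]
      have e2 : (m+m) % 2 = 0 := by omega
      have e3 : (m+m) / 2 = m := by omega
      rw [e2, e3]
      norm_num
      have e1 : m + m + 1 = 2*m+1 := by ring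
      rw [e1, smul_pow, h1, ← Int.cast_smul_eq_zsmul ℝ, smul_smul, smul_smul]
      congr 1
      push_cast
      ring
    · subst hm
      have h2 := (hpow m).2
      simp only [hf, hFs, hFc]
      have e2 : (2*m+1) % 2 = 1 := by omega
      have e3 : (2*m+1) / 2 = m := by omega
      rw [e2, e3]
      norm_num
      have e1 : 2*m+1+1 = 2*m+2 := by ring
      rw [e1, smul_pow, h2, ← Int.cast_smul_eq_zsmul ℝ, smul_smul, smul_smul]
      congr 1
      push_cast
      ring
  have hFsSum : HasSum Fs (Real.sin φ • K) := by
    have base := (Real.hasSum_sin φ).smul_const K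
    have inj : Function.Injective (fun m : ℕ => 2*m) := by
      intro a b h
      have h' : 2*a = 2*b := h
      omega
    refine (inj.hasSum_iff ?_).1 ?_
    · intro n hn
      simp only [hFs]
      have : n % 2 = 1 := by
        rcases Nat.even_or_odd n with ⟨m, hm⟩ | ⟨m, hm⟩
        · exact absurd ⟨m, (by omega : 2*m = n)⟩ hn
        · omega
      rw [this]; norm_num
    · refine base.congr_fun fun m => ?_
      simp only [hFs, Function.comp]
      have e2 : (2*m) % 2 = 0 := by omega
      have e3 : (2*m) / 2 = m := by omega
      rw [e2, e3, if_pos rfl]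
  have hFcSum : HasSum Fc ((1 - Real.cos φ) • (K*K)) := by
    have base0 := (hasSum_nat_add_iff'
      (f := fun n : ℕ => (-1:ℝ)^n * φ^(2*n)/(Nat.factorial (2*n))) 1).2 (Real.hasSum_cos φ)
    simp only [Finset.range_one, Finset.sum_singleton] at base0
    norm_num at base0
    have base1 : HasSum (fun n : ℕ => (-1:ℝ)^n * φ^(2*n+2)/(Nat.factorial (2*n+2)))
        (1 - Real.cos φ) := by
      have hneg := base0.neg
      rw [neg_sub] at hneg
      refine hneg.congr_fun fun n => ?_
      have e : 2*(n+1) = 2*n+2 := by ring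
      rw [e, pow_succ]
      ring
    have base := base1.smul_const (K*K)
    have inj : Function.Injective (fun m : ℕ => 2*m+1) := by
      intro a b h
      have h' : 2*a+1 = 2*b+1 := h
      omega
    refine (inj.hasSum_iff ?_).1 ?_
    · intro n hn
      simp only [hFc]
      have : n % 2 = 0 := by
        rcases Nat.even_or_odd n with ⟨m, hm⟩ | ⟨m, hm⟩
        · omega
        · exact absurd ⟨m, (by omega : 2*m+1 = n)⟩ hn
      rw [this]; norm_num
    · refine base.congr_fun fun m => ?_
      simp only [hFc, Function.comp]
      have e2 : (2*m+1) % 2 = 1 := by omega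
      have e3 : (2*m+1) / 2 = m := by omega
      rw [e2, e3, if_pos rfl]
  have hshift : HasSum (fun n => f (n+1))
      (Real.sin φ • K + (1 - Real.cos φ) • (K*K)) :=
    (hFsSum.add hFcSum).congr_fun fun n => (hsplit n)
  have hfull : HasSum f ((Real.sin φ • K + (1 - Real.cos φ) • (K*K)) + 1) := by
    have h := (hasSum_nat_add_iff (f := f) 1).1 hshift
    simpa [hf] using h
  have hfull' : HasSum (fun n : ℕ => ((Nat.factorial n : ℝ))⁻¹ • (φ • K)^n)
      ((Real.sin φ • K + (1 - Real.cos φ) • (K*K)) + 1) := hfull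
  rw [hexp, hfull'.tsum_eq]
  abel

lemma rodrigues_core' (R : Matrix (Fin 3) (Fin 3) ℝ) (t φ : ℝ)
    (hs : 0 < Real.sin φ) (ht1ne : t + 1 ≠ 0)
    (hcos : Real.cos φ = (t-1)/2)
    (hs2 : Real.sin φ ^ 2 = (3-t)*(1+t)/4)
    (hA2 : (R - Rᵀ) * (R - Rᵀ) = (t+1) • (R + Rᵀ) - (2*(t+1)) • (1 : Matrix (Fin 3) (Fin 3) ℝ))
    (hA3 : ((R - Rᵀ) * (R - Rᵀ)) * (R - Rᵀ) = ((t-3)*(t+1)) • (R - Rᵀ)) :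
    let K : Matrix (Fin 3) (Fin 3) ℝ := (1/(2*Real.sin φ)) • (R - Rᵀ)
    K*K*K = -K ∧ 1 + Real.sin φ • K + (1 - Real.cos φ) • (K*K) = R := by
  intro K
  have hsne : Real.sin φ ≠ 0 := ne_of_gt hs
  have h4 : 4 * Real.sin φ ^ 2 = (3-t)*(1+t) := by linear_combination 4*hs2
  have hval : (t-3)*(t+1) = -(4*Real.sin φ^2) := by linear_combination 4*hs2
  have hK3 : K*K*K = -K := by
    show ((1/(2*Real.sin φ)) • (R - Rᵀ)) * ((1/(2*Real.sin φ)) • (R - Rᵀ)) * ((1/(2*Real.sin φ)) • (R - Rᵀ)) = _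
    simp only [smul_mul_assoc, mul_smul_comm, smul_smul]
    rw [hA3, smul_smul, hval, ← neg_smul]
    congr 1
    field_simp
    ring
  refine ⟨hK3, ?_⟩
  have hc1 : Real.sin φ • K = (1/2 : ℝ) • (R - Rᵀ) := by
    show Real.sin φ • ((1/(2*Real.sin φ)) • (R - Rᵀ)) = _
    rw [smul_smul]
    congr 1
    field_simp <;> ring
  have hKK : K*K = (1/(4*Real.sin φ^2)) • ((R - Rᵀ) * (R - Rᵀ)) := by
    show ((1/(2*Real.sin φ)) • (R - Rᵀ)) * ((1/(2*Real.sin φ)) • (R - Rᵀ)) = _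
    simp only [smul_mul_assoc, mul_smul_comm, smul_smul]
    congr 1
    field_simp
    ring
  have hc2 : (1 - Real.cos φ) * (1/(4*Real.sin φ^2)) = 1/(2*(t+1)) := by
    rw [hcos]
    field_simp
    linear_combination (-1) * h4
  rw [hc1, hKK, smul_smul, hc2, hA2]
  simp only [smul_sub, smul_smul]
  have e1 : 1/(2*(t+1)) * (t+1) = 1/2 := by field_simp
  have e2 : 1/(2*(t+1)) * (2*(t+1)) = 1 := by field_simp
  rw [e1, e2]
  module


lemma adj_eq' (M : Matrix (Fin 3) (Fin 3) ℝ) :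
    M.adjugate = M*M - M.trace • M + (((M.trace)^2 - (M*M).trace)/2) • (1 : Matrix (Fin 3) (Fin 3) ℝ) := by
  ext i j
  fin_cases i <;> fin_cases j <;>
    simp [Matrix.adjugate_fin_three, Matrix.mul_apply, Matrix.trace_fin_three,
      Fin.sum_univ_three, Matrix.one_apply] <;> ring

set_option maxHeartbeats 1000000 in
/-- Closed-form log on `SO(3)`: for `R ∈ SO(3)` with `tr R ≠ −1` and `R ≠ I`, setting
`φ = arccos((tr R − 1)/2) ∈ (0, π)`, the matrix `X = (φ/(2 sin φ))(R − Rᵀ)` is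
skew-symmetric and `exp X = R`. -/
theorem stmt18 (R : Matrix (Fin 3) (Fin 3) ℝ)
    (horth : Rᵀ * R = 1) (hdet : R.det = 1)
    (htr : R.trace ≠ -1) (hne : R ≠ 1)
    (φ : ℝ) (hφ : φ = Real.arccos ((R.trace - 1) / 2))
    (X : Matrix (Fin 3) (Fin 3) ℝ)
    (hX : X = (φ / (2 * Real.sin φ)) • (R - Rᵀ)) :
    φ ∈ Set.Ioo 0 Real.pi ∧ Xᵀ = -X ∧ NormedSpace.exp X = R := by
  set t := R.trace with ht
  have hRRT : R * Rᵀ = 1 := mul_eq_one_comm.mp horth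
  have hadj : R.adjugate = Rᵀ := by
    have h1 : R.adjugate * R = 1 := by rw [Matrix.adjugate_mul, hdet, one_smul]
    calc R.adjugate = R.adjugate * (R * Rᵀ) := by rw [hRRT, mul_one]
    _ = (R.adjugate * R) * Rᵀ := by rw [mul_assoc]
    _ = Rᵀ := by rw [h1, one_mul]
  have hE0 : Rᵀ = R*R - t • R + ((t^2 - (R*R).trace)/2) • (1 : Matrix (Fin 3) (Fin 3) ℝ) := by
    rw [← hadj]; exact adj_eq' R
  have htr2 : (R*R).trace = t^2 - 2*t := by
    have h := congrArg Matrix.trace hE0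
    simp only [Matrix.trace_transpose, Matrix.trace_add, Matrix.trace_sub,
      Matrix.trace_smul, Matrix.trace_one] at h
    simp only [smul_eq_mul] at h
    norm_num at h
    linarith
  have hE : R*R = t • R - t • (1 : Matrix (Fin 3) (Fin 3) ℝ) + Rᵀ := by
    rw [hE0, htr2]
    have : (t^2 - (t^2 - 2*t))/2 = t := by ring
    rw [this]
    module
  have hEt : Rᵀ*Rᵀ = t • Rᵀ - t • (1 : Matrix (Fin 3) (Fin 3) ℝ) + R := by
    have h := congrArg Matrix.transpose hE
    simp only [Matrix.transpose_mul, Matrix.transpose_add, Matrix.transpose_sub,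
      Matrix.transpose_smul, Matrix.transpose_one, Matrix.transpose_transpose] at h
    exact h
  have hA2 : (R - Rᵀ) * (R - Rᵀ)
      = (t+1) • (R + Rᵀ) - (2*(t+1)) • (1 : Matrix (Fin 3) (Fin 3) ℝ) := by
    rw [sub_mul, mul_sub, mul_sub, hE, hEt, horth, hRRT]
    module
  have hA3 : ((R - Rᵀ) * (R - Rᵀ)) * (R - Rᵀ) = ((t-3)*(t+1)) • (R - Rᵀ) := by
    rw [hA2, sub_mul, smul_mul_assoc, smul_mul_assoc, add_mul, mul_sub, mul_sub,
      hE, hEt, horth, hRRT, one_mul]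
    module
  -- entrywise facts
  have hcol : ∀ j, (R 0 j)^2 + (R 1 j)^2 + (R 2 j)^2 = 1 := by
    intro j
    have h := congrFun (congrFun horth j) j
    simpa [Matrix.mul_apply, Fin.sum_univ_three, Matrix.one_apply, sq] using h
  have hTr : t = R 0 0 + R 1 1 + R 2 2 := by rw [ht, Matrix.trace_fin_three]
  have hlt3 : t < 3 := by
    rcases lt_or_ge t 3 with h | h
    · exact h
    · exfalso
      have h00 : R 0 0 ≤ 1 := by nlinarith [hcol 0, sq_nonneg (R 0 0 - 1), sq_nonneg (R 1 0), sq_nonneg (R 2 0)]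
      have h11 : R 1 1 ≤ 1 := by nlinarith [hcol 1, sq_nonneg (R 1 1 - 1), sq_nonneg (R 0 1), sq_nonneg (R 2 1)]
      have h22 : R 2 2 ≤ 1 := by nlinarith [hcol 2, sq_nonneg (R 2 2 - 1), sq_nonneg (R 0 2), sq_nonneg (R 1 2)]
      have e00 : R 0 0 = 1 := by linarith [hTr]
      have e11 : R 1 1 = 1 := by linarith [hTr]
      have e22 : R 2 2 = 1 := by linarith [hTr]
      have z10 : R 1 0 = 0 := by
        have hq : (R 1 0)^2 ≤ 0 := by nlinarith [hcol 0, sq_nonneg (R 2 0)]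
        exact pow_eq_zero_iff (two_ne_zero) |>.mp (le_antisymm hq (sq_nonneg _))
      have z20 : R 2 0 = 0 := by
        have hq : (R 2 0)^2 ≤ 0 := by nlinarith [hcol 0, sq_nonneg (R 1 0)]
        exact pow_eq_zero_iff (two_ne_zero) |>.mp (le_antisymm hq (sq_nonneg _))
      have z01 : R 0 1 = 0 := by
        have hq : (R 0 1)^2 ≤ 0 := by nlinarith [hcol 1, sq_nonneg (R 2 1)]
        exact pow_eq_zero_iff (two_ne_zero) |>.mp (le_antisymm hq (sq_nonneg _))
      have z21 : R 2 1 = 0 := by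
        have hq : (R 2 1)^2 ≤ 0 := by nlinarith [hcol 1, sq_nonneg (R 0 1)]
        exact pow_eq_zero_iff (two_ne_zero) |>.mp (le_antisymm hq (sq_nonneg _))
      have z02 : R 0 2 = 0 := by
        have hq : (R 0 2)^2 ≤ 0 := by nlinarith [hcol 2, sq_nonneg (R 1 2)]
        exact pow_eq_zero_iff (two_ne_zero) |>.mp (le_antisymm hq (sq_nonneg _))
      have z12 : R 1 2 = 0 := by
        have hq : (R 1 2)^2 ≤ 0 := by nlinarith [hcol 2, sq_nonneg (R 0 2)]
        exact pow_eq_zero_iff (two_ne_zero) |>.mp (le_antisymm hq (sq_nonneg _))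
      apply hne
      ext i j
      fin_cases i <;> fin_cases j <;>
        simp [e00, e11, e22, z10, z20, z01, z21, z02, z12, Matrix.one_apply]
  have hmul : (R*R).trace = R 0 0^2 + R 1 1^2 + R 2 2^2
      + 2*(R 0 1 * R 1 0) + 2*(R 0 2 * R 2 0) + 2*(R 1 2 * R 2 1) := by
    simp [Matrix.trace_fin_three, Matrix.mul_apply, Fin.sum_univ_three]
    ring
  have hM : R 0 0^2 + R 1 1^2 + R 2 2^2
      + 2*(R 0 1 * R 1 0) + 2*(R 0 2 * R 2 0) + 2*(R 1 2 * R 2 1) = t^2 - 2*t := by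
    rw [← hmul]; exact htr2
  have hsq : (3 - t)*(1 + t)
      = (R 0 1 - R 1 0)^2 + (R 0 2 - R 2 0)^2 + (R 1 2 - R 2 1)^2 := by
    have h0 := hcol 0
    have h1 := hcol 1
    have h2 := hcol 2
    rw [hTr] at hM ⊢
    linear_combination hM - h0 - h1 - h2
  have hprod : 0 ≤ (3 - t)*(1 + t) := by rw [hsq]; positivity
  have hgem1 : -1 ≤ t := by nlinarith [hprod, hlt3]
  have hgt : -1 < t := hgem1.lt_of_ne (fun h => htr h.symm)
  -- φ facts
  have hy1 : (t - 1)/2 < 1 := by linarith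
  have hy2 : -1 < (t - 1)/2 := by linarith
  have hφ0 : 0 < φ := by rw [hφ]; exact Real.arccos_pos.mpr hy1
  have hφπ : φ < Real.pi := by
    rw [hφ]
    refine lt_of_le_of_ne (Real.arccos_le_pi _) ?_
    rw [Ne, Real.arccos_eq_pi]
    linarith
  have hcos : Real.cos φ = (t - 1)/2 := by
    rw [hφ]; exact Real.cos_arccos (by linarith) (by linarith)
  have hs : 0 < Real.sin φ := Real.sin_pos_of_pos_of_lt_pi hφ0 hφπ
  have hs2 : Real.sin φ ^ 2 = (3 - t)*(1 + t)/4 := by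
    have hpy := Real.sin_sq_add_cos_sq φ
    rw [hcos] at hpy
    linear_combination hpy
  -- skew symmetry
  have hskew : Xᵀ = -X := by
    rw [hX, Matrix.transpose_smul, Matrix.transpose_sub, Matrix.transpose_transpose]
    rw [← smul_neg]
    congr 1
    simp
  refine ⟨⟨hφ0, hφπ⟩, hskew, ?_⟩
  -- the exponential
  have ht1ne : t + 1 ≠ 0 := by intro h; exact htr (by linarith)
  obtain ⟨hK3, hfin⟩ := rodrigues_core' R t φ hs ht1ne hcos hs2 hA2 hA3
  have hXK : X = φ • ((1/(2*Real.sin φ)) • (R - Rᵀ)) := by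
    rw [hX, smul_smul]
    congr 1
    rw [mul_one_div]
  rw [hXK, exp_rodrigues' _ hK3 φ]
  exact hfin
end
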